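/- Let n be even, k ≥ 2, m ≥ n, and m ≤ nk/2. Then δ(k,n,m) ≥ δ(k−2,n,m−n), where δ(k,n,m) = p(k,n,m) − p(k,n,m−1). -/

import Mathlib

/-- Number of partitions of `m` with at most `k` parts, each part at most `n`
(partitions contained in a `k × n` rectangle). -/
def p (k n m : ℕ) : ℕ :=
  Fintype.card {π : Nat.Partition m // π.parts.card ≤ k ∧ ∀ j ∈ π.parts, j ≤ n}

/-- `p` extended to integer `m`, with value `0` for negative `m`. -/
def pZ (k n : ℕ) (m : ℤ) : ℕ := if 0 ≤ m then p k n m.toNat else 0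

namespace DeltaGe
open MvPolynomial
noncomputable section



abbrev R : Type := MvPolynomial ℕ ℚ

def wt (d : ℕ →₀ ℕ) : ℕ := d.sum fun i e => i * e
def dg (d : ℕ →₀ ℕ) : ℕ := d.sum fun _ e => e

def good (n k : ℕ) (m : ℤ) (d : ℕ →₀ ℕ) : Prop :=
  dg d = k ∧ (wt d : ℤ) = m ∧ ∀ i ∈ d.support, i ≤ n

def V (n k : ℕ) (m : ℤ) : Submodule ℚ R where
  carrier := {p | ∀ d ∈ p.support, good n k m d}
  add_mem' := by
    intro a b ha hb d hd
    rcases Finset.mem_union.1 (MvPolynomial.support_add hd) with h | h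
    · exact ha d h
    · exact hb d h
  zero_mem' := by intro d hd; simp at hd
  smul_mem' := by
    intro c x hx d hd
    exact hx d (Finsupp.support_smul hd)

lemma monomial_mem_V {n k : ℕ} {m : ℤ} {d : ℕ →₀ ℕ} (h : good n k m d) (c : ℚ) :
    (monomial d c : R) ∈ V n k m := by
  intro e he
  rw [MvPolynomial.support_monomial] at he
  split at he
  · simp at he
  · simp at he; subst he; exact h

lemma zero_mem_or {n k : ℕ} {m : ℤ} : (0:R) ∈ V n k m := (V n k m).zero_mem

lemma V_eq_bot {n k : ℕ} {m : ℤ} (hm : m < 0) : V n k m = ⊥ := by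
  rw [eq_bot_iff]
  intro p hp
  simp only [Submodule.mem_bot]
  by_contra h
  obtain ⟨d, hd⟩ := exists_mem_of_ne_empty _ (fun he => h (MvPolynomial.support_eq_empty.1 he))
  have := (hp d hd).2.1
  omega
  where exists_mem_of_ne_empty (s : Finset (ℕ →₀ ℕ)) (h : s ≠ ∅) : ∃ x, x ∈ s :=
    Finset.nonempty_iff_ne_empty.2 h

lemma V_eq_span (n k : ℕ) (m : ℤ) :
    V n k m = Submodule.span ℚ ((fun d => (monomial d 1 : R)) '' {d | good n k m d}) := by
  apply le_antisymm
  · intro p hp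
    rw [← MvPolynomial.support_sum_monomial_coeff p]
    apply Submodule.sum_mem
    intro d hd
    have : (monomial d (coeff d p) : R) = coeff d p • monomial d 1 := by
      rw [MvPolynomial.smul_monomial, smul_eq_mul, mul_one]
    rw [this]
    exact Submodule.smul_mem _ _ (Submodule.subset_span ⟨d, hp d hd, rfl⟩)
  · rw [Submodule.span_le]
    rintro _ ⟨d, hd, rfl⟩
    exact monomial_mem_V hd 1

lemma V_mul {n k₁ k₂ : ℕ} {m₁ m₂ : ℤ} {a b : R} (ha : a ∈ V n k₁ m₁) (hb : b ∈ V n k₂ m₂) :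
    a * b ∈ V n (k₁ + k₂) (m₁ + m₂) := by
  intro d hd
  obtain ⟨d₁, hd₁, d₂, hd₂, rfl⟩ := Finset.mem_add.1 (MvPolynomial.support_mul a b hd)
  obtain ⟨h1, h2, h3⟩ := ha d₁ hd₁
  obtain ⟨h1', h2', h3'⟩ := hb d₂ hd₂
  refine ⟨?_, ?_, ?_⟩
  · rw [dg, Finsupp.sum_add_index' (by simp) (by intros; rfl)]
    · rw [← h1, ← h1']; rfl
  · rw [wt, Finsupp.sum_add_index' (by simp) (by intros; ring)]
    push_cast
    rw [← h2, ← h2']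
    push_cast [wt]
    ring
  · intro i hi
    rcases Finset.mem_union.1 (Finsupp.support_add hi) with h | h
    · exact h3 i h
    · exact h3' i h





lemma pderiv_comm (b e : ℕ) (p : R) : pderiv b (pderiv e p) = pderiv e (pderiv b p) := by
  induction p using MvPolynomial.induction_on' with
  | monomial s a =>
    rcases eq_or_ne b e with rfl | hbe
    · rfl
    · rw [pderiv_monomial, pderiv_monomial, pderiv_monomial, pderiv_monomial]
      have h1 : (s - fun₀ | e => 1) b = s b := by
        rw [Finsupp.tsub_apply, Finsupp.single_apply, if_neg (Ne.symm hbe)]; rfl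
      have h2 : (s - fun₀ | b => 1) e = s e := by
        rw [Finsupp.tsub_apply, Finsupp.single_apply, if_neg hbe]; rfl
      have h3 : s - (fun₀ | e => 1) - (fun₀ | b => 1) = s - (fun₀ | b => 1) - (fun₀ | e => 1) := by
        ext i; simp only [Finsupp.tsub_apply]; omega
      rw [h1, h2, h3]; ring_nf
  | add p q hp hq => simp [map_add, hp, hq]

def T (a b : ℕ) : R →ₗ[ℚ] R := (LinearMap.mulLeft ℚ (X a)).comp (pderiv b).toLinearMap

lemma T_apply (a b : ℕ) (p : R) : T a b p = X a * pderiv b p := rfl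

lemma T_monomial (a b : ℕ) (d : ℕ →₀ ℕ) (c : ℚ) :
    T a b (monomial d c) = monomial ((fun₀ | a => 1) + (d - fun₀ | b => 1)) (c * d b) := by
  rw [T_apply, pderiv_monomial, X, monomial_mul, one_mul]

lemma T_mul (a b : ℕ) (p q : R) : T a b (p * q) = T a b p * q + p * T a b q := by
  rw [T_apply, T_apply, T_apply, pderiv_mul]; ring

lemma T_comm (a b c e : ℕ) (p : R) :
    T a b (T c e p) - T c e (T a b p)
      = (if c = b then T a e p else 0) - (if a = e then T c b p else 0) := by
  simp only [T_apply]
  rw [pderiv_mul, pderiv_mul, pderiv_X, pderiv_X, pderiv_comm b e p]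
  simp only [Pi.single_apply, mul_ite, ite_mul, mul_zero, zero_mul, mul_one, one_mul]
  split_ifs <;> ring

def Eop (n : ℕ) : R →ₗ[ℚ] R := ∑ i ∈ Finset.range n, ((n : ℚ) - i) • T (i+1) i
def Fop (n : ℕ) : R →ₗ[ℚ] R := ∑ i ∈ Finset.range n, ((i : ℚ) + 1) • T i (i+1)

lemma Fop_mul (n : ℕ) (p q : R) : Fop n (p * q) = Fop n p * q + p * Fop n q := by
  simp only [Fop, LinearMap.sum_apply, LinearMap.smul_apply, T_mul, smul_add, Finset.sum_add_distrib,
    Finset.mul_sum, Finset.sum_mul, smul_mul_assoc, mul_smul_comm]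

/-- The key commutator formula, as operators applied to any `p`. -/
lemma EF_comm (n : ℕ) (p : R) :
    Eop n (Fop n p) - Fop n (Eop n p)
      = ∑ i ∈ Finset.range n, (((n : ℚ) - i) * ((i : ℚ) + 1)) • (T (i+1) (i+1) p - T i i p) := by
  simp only [Eop, Fop, LinearMap.sum_apply, LinearMap.smul_apply, map_sum, map_smul,
    Finset.smul_sum]
  conv_lhs => enter [1]; rw [Finset.sum_comm]
  rw [← Finset.sum_sub_distrib]
  refine Finset.sum_congr rfl fun i hi => ?_
  rw [← Finset.sum_sub_distrib]
  have key : ∀ j ∈ Finset.range n,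
      ((j : ℚ) + 1) • ((n : ℚ) - i) • T (i+1) i (T j (j+1) p)
        - ((n : ℚ) - i) • ((j : ℚ) + 1) • T j (j+1) (T (i+1) i p)
      = if j = i then (((n : ℚ) - i) * ((i : ℚ) + 1)) • (T (i+1) (i+1) p - T i i p) else 0 := by
    intro j _
    rw [smul_comm ((j:ℚ)+1) ((n:ℚ)-(i:ℚ)), ← smul_sub, ← smul_sub, smul_smul, T_comm]
    rcases eq_or_ne j i with rfl | hji
    · rw [if_pos rfl, if_pos rfl, if_pos rfl]
    · rw [if_neg hji, if_neg (by omega : ¬ j = i), if_neg (by omega : ¬ i + 1 = j + 1)]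
      simp
  rw [Finset.sum_congr rfl key, Finset.sum_ite_eq' (Finset.range n) i, if_pos hi]




lemma dg_add (a b : ℕ →₀ ℕ) : dg (a + b) = dg a + dg b := by
  rw [dg, Finsupp.sum_add_index' (by simp) (by intros; rfl)]; rfl

lemma wt_add (a b : ℕ →₀ ℕ) : wt (a + b) = wt a + wt b := by
  rw [wt, Finsupp.sum_add_index' (by simp) (by intros; ring)]; rfl

lemma dg_single (i e : ℕ) : dg (fun₀ | i => e) = e := by
  rw [dg, Finsupp.sum_single_index]; rfl

lemma wt_single (i e : ℕ) : wt (fun₀ | i => e) = i * e := by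
  rw [wt, Finsupp.sum_single_index]; ring

lemma good_move {n k : ℕ} {m : ℤ} {d : ℕ →₀ ℕ} (h : good n k m d) {a : ℕ} (ha : d a ≠ 0)
    {b : ℕ} (hb : b ≤ n) :
    good n k (m - a + b) ((fun₀ | b => 1) + (d - fun₀ | a => 1)) := by
  obtain ⟨h1, h2, h3⟩ := h
  have hd : d = (d - fun₀ | a => 1) + (fun₀ | a => 1) := by
    ext i
    rcases eq_or_ne i a with rfl | hia
    · have h1 : d i ≠ 0 := ha
      simp only [Finsupp.coe_add, Finsupp.coe_tsub, Pi.add_apply, Pi.sub_apply,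
        Finsupp.single_eq_same]
      omega
    · simp only [Finsupp.coe_add, Finsupp.coe_tsub, Pi.add_apply, Pi.sub_apply,
        Finsupp.single_apply, if_neg (Ne.symm hia)]
      omega
  refine ⟨?_, ?_, ?_⟩
  · rw [← h1, dg_add, dg_single]
    conv_rhs => rw [hd, dg_add, dg_single]
    omega
  · have hw : wt d = wt (d - fun₀ | a => 1) + a := by
      conv_lhs => rw [hd]
      rw [wt_add, wt_single, mul_one]
    rw [wt_add, wt_single, mul_one]
    push_cast
    rw [← h2]
    push_cast [hw]
    ring
  · intro i hi
    rcases Finset.mem_union.1 (Finsupp.support_add hi) with hh | hh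
    · rw [Finsupp.mem_support_iff, Finsupp.single_apply] at hh
      rcases eq_or_ne b i with rfl | hbi
      · exact hb
      · rw [if_neg hbi] at hh; omega
    · exact h3 i (Finsupp.support_tsub hh)

lemma Eop_mem {n k : ℕ} {m : ℤ} {p : R} (hp : p ∈ V n k m) : Eop n p ∈ V n k (m + 1) := by
  rw [V_eq_span] at hp
  induction hp using Submodule.span_induction with
  | mem x hx =>
    obtain ⟨d, hd, rfl⟩ := hx
    rw [Eop, LinearMap.sum_apply]
    apply Submodule.sum_mem
    intro i hi
    rw [LinearMap.smul_apply, T_monomial]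
    apply Submodule.smul_mem
    rcases eq_or_ne (d i) 0 with h0 | h0
    · rw [h0]; norm_num
    · have hgm := good_move hd h0 (b := i + 1) (by simp at hi; omega)
      have hidx : m - (i : ℤ) + ((i + 1 : ℕ) : ℤ) = m + 1 := by push_cast; ring
      rw [hidx] at hgm
      exact monomial_mem_V hgm _
  | zero => simp
  | add x y _ _ hx hy => rw [map_add]; exact (V n k (m+1)).add_mem hx hy
  | smul c x _ hx => rw [map_smul]; exact (V n k (m+1)).smul_mem c hx

lemma Fop_mem {n k : ℕ} {m : ℤ} {p : R} (hp : p ∈ V n k m) : Fop n p ∈ V n k (m - 1) := by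
  rw [V_eq_span] at hp
  induction hp using Submodule.span_induction with
  | mem x hx =>
    obtain ⟨d, hd, rfl⟩ := hx
    rw [Fop, LinearMap.sum_apply]
    apply Submodule.sum_mem
    intro i hi
    rw [LinearMap.smul_apply, T_monomial]
    apply Submodule.smul_mem
    rcases eq_or_ne (d (i+1)) 0 with h0 | h0
    · rw [h0]; norm_num
    · have hgm := good_move hd h0 (b := i) (by simp at hi; omega)
      have hidx : m - ((i + 1 : ℕ) : ℤ) + (i : ℤ) = m - 1 := by push_cast; ring
      rw [hidx] at hgm
      exact monomial_mem_V hgm _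
  | zero => simp
  | add x y _ _ hx hy => rw [map_add]; exact (V n k (m-1)).add_mem hx hy
  | smul c x _ hx => rw [map_smul]; exact (V n k (m-1)).smul_mem c hx

lemma T_diag_monomial (j : ℕ) (d : ℕ →₀ ℕ) (c : ℚ) :
    T j j (monomial d c) = (d j : ℚ) • monomial d c := by
  rw [T_monomial]
  rcases eq_or_ne (d j) 0 with h0 | h0
  · rw [h0]; norm_num
  · have : (fun₀ | j => 1) + (d - fun₀ | j => 1) = d := by
      ext i
      rcases eq_or_ne i j with rfl | hij
      · have h1 : d i ≠ 0 := h0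
        simp only [Finsupp.coe_add, Finsupp.coe_tsub, Pi.add_apply, Pi.sub_apply,
          Finsupp.single_eq_same]
        omega
      · simp only [Finsupp.coe_add, Finsupp.coe_tsub, Pi.add_apply, Pi.sub_apply,
          Finsupp.single_apply, if_neg (Ne.symm hij)]
        omega
    rw [this, smul_monomial, smul_eq_mul, mul_comm]

lemma sum_range_eq_of_good {n k : ℕ} {m : ℤ} {d : ℕ →₀ ℕ} (h : good n k m d) :
    (∑ i ∈ Finset.range (n+1), d i = k) ∧ (∑ i ∈ Finset.range (n+1), i * d i = wt d) := by
  have hsub : d.support ⊆ Finset.range (n+1) := by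
    intro i hi
    simp only [Finset.mem_range]
    have := h.2.2 i hi
    omega
  constructor
  · rw [← h.1, dg, Finsupp.sum_of_support_subset d hsub _ (by intros; rfl)]
  · rw [wt, Finsupp.sum_of_support_subset d hsub _ (by intros; ring)]

lemma scalar_id {n k : ℕ} {m : ℤ} {d : ℕ →₀ ℕ} (h : good n k m d) :
    ∑ i ∈ Finset.range n, ((n : ℚ) - i) * ((i : ℚ) + 1) * ((d (i+1) : ℚ) - (d i : ℚ))
      = 2 * (m : ℚ) - (n : ℚ) * (k : ℚ) := by
  obtain ⟨hk, hm⟩ := sum_range_eq_of_good h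
  have hm' : ((m : ℚ)) = ∑ i ∈ Finset.range (n+1), (i : ℚ) * (d i : ℚ) := by
    have : ((wt d : ℕ) : ℚ) = ∑ i ∈ Finset.range (n+1), (i : ℚ) * (d i : ℚ) := by
      rw [← hm]; push_cast; rfl
    rw [← this]
    exact_mod_cast congrArg (fun z : ℤ => (z : ℚ)) h.2.1.symm
  have hk' : ((k : ℕ) : ℚ) = ∑ i ∈ Finset.range (n+1), (d i : ℚ) := by
    rw [← hk]; push_cast; rfl
  have e1 : ∑ i ∈ Finset.range n, ((n : ℚ) - i) * ((i : ℚ) + 1) * (d (i+1) : ℚ)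
      = ∑ j ∈ Finset.range (n+1), ((n : ℚ) - j + 1) * (j : ℚ) * (d j : ℚ) := by
    rw [Finset.sum_range_succ' (fun j => ((n : ℚ) - j + 1) * (j : ℚ) * (d j : ℚ)) n]
    simp only [Nat.cast_zero, mul_zero, zero_mul, add_zero]
    refine Finset.sum_congr rfl fun i _ => ?_
    push_cast
    ring
  have e2 : ∑ i ∈ Finset.range n, ((n : ℚ) - i) * ((i : ℚ) + 1) * (d i : ℚ)
      = ∑ j ∈ Finset.range (n+1), ((n : ℚ) - j) * ((j : ℚ) + 1) * (d j : ℚ) := by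
    rw [Finset.sum_range_succ]
    simp
  have split : ∑ i ∈ Finset.range n, ((n : ℚ) - i) * ((i : ℚ) + 1) * ((d (i+1) : ℚ) - (d i : ℚ))
      = ∑ j ∈ Finset.range (n+1), (2 * (j : ℚ) - n) * (d j : ℚ) := by
    have : ∀ i ∈ Finset.range n, ((n : ℚ) - i) * ((i : ℚ) + 1) * ((d (i+1) : ℚ) - (d i : ℚ))
        = ((n : ℚ) - i) * ((i : ℚ) + 1) * (d (i+1) : ℚ)
          - ((n : ℚ) - i) * ((i : ℚ) + 1) * (d i : ℚ) := by intros; ring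
    rw [Finset.sum_congr rfl this, Finset.sum_sub_distrib, e1, e2, ← Finset.sum_sub_distrib]
    refine Finset.sum_congr rfl fun j _ => ?_
    ring
  rw [split, hm', hk']
  rw [Finset.mul_sum, Finset.mul_sum, ← Finset.sum_sub_distrib]
  refine Finset.sum_congr rfl fun j _ => ?_
  ring

lemma comm_V {n k : ℕ} {m : ℤ} {p : R} (hp : p ∈ V n k m) :
    Eop n (Fop n p) - Fop n (Eop n p) = (2 * (m : ℚ) - (n : ℚ) * (k : ℚ)) • p := by
  have main : ((Eop n).comp (Fop n) - (Fop n).comp (Eop n)) p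
      = (2 * (m : ℚ) - (n : ℚ) * (k : ℚ)) • p := by
    rw [V_eq_span] at hp
    induction hp using Submodule.span_induction with
    | mem x hx =>
      obtain ⟨d, hd, rfl⟩ := hx
      rw [LinearMap.sub_apply, LinearMap.comp_apply, LinearMap.comp_apply, EF_comm]
      have : ∀ i ∈ Finset.range n,
          (((n : ℚ) - i) * ((i : ℚ) + 1)) • (T (i+1) (i+1) (monomial d 1) - T i i (monomial d 1))
          = (((n : ℚ) - i) * ((i : ℚ) + 1) * ((d (i+1) : ℚ) - (d i : ℚ))) • (monomial d 1 : R) := by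
        intro i _
        rw [T_diag_monomial, T_diag_monomial, ← sub_smul, smul_smul]
      rw [Finset.sum_congr rfl this, ← Finset.sum_smul, scalar_id hd]
    | zero => simp
    | add x y _ _ hx hy => rw [map_add, smul_add, hx, hy]
    | smul c x _ hx => rw [map_smul, hx, smul_comm]
  rw [LinearMap.sub_apply, LinearMap.comp_apply, LinearMap.comp_apply] at main
  exact main

lemma Epow_mem {n k : ℕ} {m : ℤ} {p : R} (hp : p ∈ V n k m) (j : ℕ) :
    ((Eop n ^ j : Module.End ℚ R)) p ∈ V n k (m + j) := by
  induction j with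
  | zero => simpa using hp
  | succ j ih =>
    have : ((Eop n ^ (j+1) : Module.End ℚ R)) p = Eop n ((Eop n ^ j : Module.End ℚ R) p) := by
      rw [pow_succ' (Eop n) j]; rfl
    rw [this]
    have := Eop_mem ih
    have hidx : (m + (j:ℤ)) + 1 = m + ((j:ℕ)+1 : ℕ) := by push_cast; ring
    rwa [hidx] at this

lemma F_Epow {n k : ℕ} {t : ℤ} (j : ℕ) {u : R} (hu : u ∈ V n k t) :
    Fop n ((Eop n ^ (j+1) : Module.End ℚ R) u)
      = (Eop n ^ (j+1) : Module.End ℚ R) (Fop n u)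
        - (((j : ℚ) + 1) * ((2 * (t : ℚ) - (n : ℚ) * (k : ℚ)) + j)) •
            (Eop n ^ j : Module.End ℚ R) u := by
  induction j with
  | zero =>
    have hc := comm_V hu
    have hz : Fop n (Eop n u) = Eop n (Fop n u) - (2 * (t : ℚ) - (n : ℚ) * (k : ℚ)) • u := by
      rw [← hc]; abel
    simp only [zero_add, pow_one, pow_zero, Module.End.one_apply, Nat.cast_zero]
    rw [hz]
    norm_num
  | succ j ih =>
    have hEj : (Eop n ^ (j+1) : Module.End ℚ R) u ∈ V n k (t + (j+1 : ℕ)) := Epow_mem hu (j+1)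
    have step : Fop n ((Eop n ^ (j+2) : Module.End ℚ R) u)
        = Eop n (Fop n ((Eop n ^ (j+1) : Module.End ℚ R) u))
          - (2 * ((t : ℚ) + ((j : ℚ) + 1)) - (n : ℚ) * (k : ℚ)) •
              (Eop n ^ (j+1) : Module.End ℚ R) u := by
      have hc := comm_V hEj
      push_cast at hc
      have happ : ((Eop n ^ (j+2) : Module.End ℚ R)) u
          = Eop n ((Eop n ^ (j+1) : Module.End ℚ R) u) := by
        rw [pow_succ' (Eop n) (j+1)]; rfl
      rw [happ, ← hc]
      abel
    rw [step, ih, map_sub, map_smul]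
    have happ2 : Eop n ((Eop n ^ (j+1) : Module.End ℚ R) (Fop n u))
        = (Eop n ^ (j+2) : Module.End ℚ R) (Fop n u) := by
      rw [pow_succ' (Eop n) (j+1)]; rfl
    have happ3 : Eop n ((Eop n ^ j : Module.End ℚ R) u)
        = (Eop n ^ (j+1) : Module.End ℚ R) u := by
      rw [pow_succ' (Eop n) j]; rfl
    rw [happ2, happ3, sub_sub, ← add_smul]
    have hco : ((j : ℚ) + 1) * (2 * (t : ℚ) - (n : ℚ) * (k : ℚ) + j)
        + (2 * ((t : ℚ) + ((j : ℚ) + 1)) - (n : ℚ) * (k : ℚ))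
        = (((j + 1 : ℕ) : ℚ) + 1) * (2 * (t : ℚ) - (n : ℚ) * (k : ℚ) + ((j + 1 : ℕ) : ℚ)) := by
      push_cast; ring
    rw [hco]

lemma FE_inj {n k : ℕ} {s : ℤ} (hs : 2 * s < (n : ℤ) * k) {p : R} (hp : p ∈ V n k s)
    (h0 : Fop n (Eop n p) = 0) : p = 0 := by
  have hσ : 2 * (s : ℚ) - (n : ℚ) * (k : ℚ) < 0 := by
    have : (2 * s : ℤ) < ((n : ℤ) * k) := hs
    have h' : ((2 * s : ℤ) : ℚ) < (((n : ℤ) * k : ℤ) : ℚ) := by exact_mod_cast this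
    push_cast at h'
    linarith
  have key : ∀ j : ℕ, ∃ u ∈ V n k (s - j), p = (Eop n ^ j : Module.End ℚ R) u := by
    intro j
    induction j with
    | zero => exact ⟨p, by simpa using hp, by simp⟩
    | succ j ih =>
      obtain ⟨u, hu, rfl⟩ := ih
      have hFE : Fop n ((Eop n ^ (j+1) : Module.End ℚ R) u) = 0 := by
        have happ : Eop n ((Eop n ^ j : Module.End ℚ R) u)
            = (Eop n ^ (j+1) : Module.End ℚ R) u := by
          rw [pow_succ' (Eop n) j]; rfl
        rw [← happ]
        exact h0
      have hid := F_Epow j hu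
      rw [hFE] at hid
      set c : ℚ := ((j : ℚ) + 1) * ((2 * ((s - (j:ℤ) : ℤ) : ℚ) - (n : ℚ) * (k : ℚ)) + j) with hc
      have hcne : c ≠ 0 := by
        rw [hc]
        have : 2 * ((s - (j:ℤ) : ℤ) : ℚ) - (n : ℚ) * (k : ℚ) + j
            = (2 * (s : ℚ) - (n : ℚ) * (k : ℚ)) - j := by push_cast; ring
        rw [this]
        have hj : (0:ℚ) ≤ j := by positivity
        have h1 : (2 * (s : ℚ) - (n : ℚ) * (k : ℚ)) - j < 0 := by linarith
        have h2 : (0:ℚ) < (j : ℚ) + 1 := by positivity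
        exact mul_ne_zero (ne_of_gt h2) (ne_of_lt h1)
      have heq : (Eop n ^ (j+1) : Module.End ℚ R) (Fop n u)
          = c • (Eop n ^ j : Module.End ℚ R) u := sub_eq_zero.mp hid.symm
      have hu' : (Eop n ^ j : Module.End ℚ R) u
          = (Eop n ^ (j+1) : Module.End ℚ R) (c⁻¹ • Fop n u) := by
        rw [map_smul, heq, smul_smul, inv_mul_cancel₀ hcne, one_smul]
      refine ⟨c⁻¹ • Fop n u, ?_, hu'⟩
      have hFu := Fop_mem hu
      have hidx : (s - (j:ℤ)) - 1 = s - ((j:ℕ)+1 : ℕ) := by push_cast; ring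
      rw [hidx] at hFu
      exact Submodule.smul_mem _ _ hFu
  obtain ⟨u, hu, rfl⟩ := key (s.toNat + 1)
  have : u = 0 := by
    have hneg : s - ((s.toNat + 1 : ℕ) : ℤ) < 0 := by omega
    have := V_eq_bot (n := n) (k := k) hneg ▸ hu
    simpa using this
  rw [this, map_zero]

def cc (n i : ℕ) : ℚ := (-1)^i * (n.choose i)

def Qp (n : ℕ) : R := ∑ i ∈ Finset.range (n+1), cc n i • (X i * X (n-i))

lemma cc_symm {n i : ℕ} (hn : Even n) (hi : i ≤ n) : cc n (n - i) = cc n i := by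
  rw [cc, cc, Nat.choose_symm hi]
  congr 1
  rcases Nat.even_or_odd i with he | ho
  · have hev : Even (n - i) := (Nat.even_sub hi).2 (iff_of_true hn he)
    rw [he.neg_one_pow, hev.neg_one_pow]
  · have hodd : Odd (n - i) := by
      refine Nat.not_even_iff_odd.1 ?_
      intro hev
      rw [Nat.even_sub hi] at hev
      exact (Nat.not_odd_iff_even.2 (hev.1 hn)) ho
    rw [ho.neg_one_pow, hodd.neg_one_pow]

lemma cc_rec {n j : ℕ} (hj : j < n) :
    ((j : ℚ) + 1) * cc n (j + 1) = -(((n - j : ℕ) : ℚ) * cc n j) := by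
  rw [cc, cc]
  have h := Nat.choose_succ_right_eq n j
  have h' : ((n.choose (j+1) * (j+1) : ℕ) : ℚ) = ((n.choose j * (n - j) : ℕ) : ℚ) := by
    exact_mod_cast congrArg (fun z : ℕ => (z : ℚ)) h
  push_cast at h'
  rw [pow_succ]
  linear_combination (-(-1:ℚ)^j) * h'

lemma Qp_mem (n : ℕ) : Qp n ∈ V n 2 (n : ℤ) := by
  rw [Qp]
  apply Submodule.sum_mem
  intro i hi
  simp only [Finset.mem_range] at hi
  apply Submodule.smul_mem
  have hX : (X i * X (n-i) : R) = monomial ((fun₀ | i => 1) + (fun₀ | (n-i) => 1)) 1 := by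
    rw [X, X, monomial_mul, one_mul]
  rw [hX]
  apply monomial_mem_V
  refine ⟨?_, ?_, ?_⟩
  · rw [dg_add, dg_single, dg_single]
  · rw [wt_add, wt_single, wt_single]
    have : i * 1 + (n - i) * 1 = n := by omega
    rw [this]
  · intro a ha
    rcases Finset.mem_union.1 (Finsupp.support_add ha) with h | h <;>
      · simp only [Finsupp.support_single_ne_zero _ (one_ne_zero), Finset.mem_singleton] at h
        omega

lemma Qp_ne (n : ℕ) (hn : Even n) : Qp n ≠ 0 := by
  rcases eq_or_ne n 0 with rfl | hn0
  · rw [Qp]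
    simp only [Finset.range_one, Finset.sum_singleton, cc]
    norm_num
  · intro h
    have := congrArg (eval (fun j => if j = 0 then (1:ℚ) else if j = n then 1 else 0)) h
    rw [Qp, map_sum, map_zero] at this
    have hterm : ∀ i ∈ Finset.range (n+1),
        eval (fun j => if j = 0 then (1:ℚ) else if j = n then 1 else 0) (cc n i • (X i * X (n-i)))
        = if i = 0 ∨ i = n then cc n i else 0 := by
      intro i hi
      simp only [Finset.mem_range] at hi
      rw [smul_eq_C_mul, eval_mul, eval_C, eval_mul, eval_X, eval_X]
      rcases eq_or_ne i 0 with rfl | h0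
      · rw [if_pos rfl, if_pos (Or.inl rfl), Nat.sub_zero]
        rw [if_neg hn0, if_pos rfl]
        ring
      · rcases eq_or_ne i n with rfl | hn'
        · rw [if_neg h0, if_pos rfl, if_pos (Or.inr rfl)]
          have : i - i = 0 := by omega
          rw [this, if_pos rfl]
          ring
        · rw [if_neg h0, if_neg hn', if_neg (show ¬(i = 0 ∨ i = n) by tauto)]
          ring
    rw [Finset.sum_congr rfl hterm] at this
    have hsub : ({0, n} : Finset ℕ) ⊆ Finset.range (n+1) := by
      intro x hx
      simp only [Finset.mem_insert, Finset.mem_singleton] at hx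
      rcases hx with rfl | rfl <;> simp [Finset.mem_range] <;> omega
    rw [← Finset.sum_subset hsub (fun x _ hx => by
      rw [if_neg]
      simp only [Finset.mem_insert, Finset.mem_singleton] at hx
      tauto)] at this
    rw [Finset.sum_pair (by omega : (0:ℕ) ≠ n)] at this
    rw [if_pos (Or.inl rfl), if_pos (Or.inr rfl), cc, cc] at this
    rw [hn.neg_one_pow] at this
    simp at this

lemma pderiv_term (n j i : ℕ) (hj : j < n) (hi : i < n + 1) :
    pderiv (j+1) (cc n i • (X i * X (n-i)) : R)
      = (if i = j+1 then cc n i • (X (n-1-j) : R) else 0)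
        + (if i = n-1-j then cc n i • (X (n-1-j) : R) else 0) := by
  rw [Derivation.map_smul, pderiv_mul, pderiv_X, pderiv_X]
  simp only [Pi.single_apply]
  rcases eq_or_ne i (j+1) with heq1 | h1 <;> rcases eq_or_ne i (n-1-j) with heq | h2
  · have e1 : n - i = j + 1 := by omega
    have e2 : n - i = n - 1 - j := by omega
    rw [if_pos heq1, if_pos heq1, if_pos e1, if_pos heq, e2]
    rw [heq]
    rw [one_mul, mul_one, smul_add]
  · have e1 : ¬ (n - i = j + 1) := by omega
    have e2 : n - i = n - 1 - j := by omega
    rw [if_pos heq1, if_pos heq1, if_neg e1, if_neg h2, e2]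
    rw [one_mul, mul_zero, add_zero, add_zero]
  · have e1 : n - i = j + 1 := by omega
    rw [if_neg h1, if_neg h1, if_pos e1, if_pos heq, heq]
    rw [zero_mul, mul_one, zero_add, zero_add]
  · have e1 : ¬ (n - i = j + 1) := by omega
    rw [if_neg h1, if_neg h1, if_neg e1, if_neg h2]
    simp

lemma pderiv_Qp (n j : ℕ) (hj : j < n) :
    pderiv (j+1) (Qp n) = (cc n (j+1) + cc n (n-1-j)) • (X (n-1-j) : R) := by
  rw [Qp, map_sum]
  rw [Finset.sum_congr rfl (fun i hi => pderiv_term n j i hj (Finset.mem_range.1 hi))]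
  rw [Finset.sum_add_distrib]
  rw [Finset.sum_ite_eq' (Finset.range (n+1)) (j+1) (fun i => cc n i • (X (n-1-j) : R))]
  rw [Finset.sum_ite_eq' (Finset.range (n+1)) (n-1-j) (fun i => cc n i • (X (n-1-j) : R))]
  rw [if_pos (by simp only [Finset.mem_range]; omega), if_pos (by simp only [Finset.mem_range]; omega)]
  rw [add_smul]

lemma Fop_Qp (n : ℕ) (hn : Even n) : Fop n (Qp n) = 0 := by
  rw [Fop, LinearMap.sum_apply]
  set g : ℕ → R := fun (j : ℕ) =>
      ((((j : ℕ) : ℚ)+1) * (cc n (j+1) + cc n (n-1-j))) • (X j * X (n-1-j) : R) with hg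
  have hsum : ∀ j ∈ Finset.range n, ((((j : ℕ):ℚ)+1) • T j (j+1)) (Qp n) = g j := by
    intro j hj
    rw [LinearMap.smul_apply, T_apply, pderiv_Qp n j (Finset.mem_range.1 hj), hg]
    rw [mul_smul_comm, smul_smul]
  rw [Finset.sum_congr rfl hsum]
  have hneg : ∀ j ∈ Finset.range n, g (n-1-j) = - g j := by
    intro j hj
    simp only [Finset.mem_range] at hj
    rw [hg]
    simp only []
    have e1 : n - 1 - j + 1 = n - j := by omega
    have e2 : n - 1 - (n - 1 - j) = j := by omega
    rw [e1, e2]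
    have e3 : ((n - 1 - j : ℕ) : ℚ) + 1 = ((n - j : ℕ) : ℚ) := by
      have : (n - 1 - j) + 1 = n - j := by omega
      exact_mod_cast congrArg (fun z : ℕ => (z : ℚ)) this
    rw [e3]
    have e4 : cc n (n - j) = cc n j := cc_symm hn (by omega)
    have e5 : cc n (n - 1 - j) = cc n (j + 1) := by
      have : n - 1 - j = n - (j + 1) := by omega
      rw [this]
      exact cc_symm hn (by omega)
    rw [e4, e5]
    rw [mul_comm (X (n-1-j) : R) (X j), ← neg_smul]
    congr 1
    have hr := cc_rec (n := n) (j := j) hj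
    linear_combination (2 : ℚ) * hr
  have hS : ∑ j ∈ Finset.range n, g j = - ∑ j ∈ Finset.range n, g j := by
    conv_lhs => rw [← Finset.sum_range_reflect g n]
    rw [Finset.sum_congr rfl hneg]
    rw [Finset.sum_neg_distrib]
  have h2 : (2:ℚ) • (∑ j ∈ Finset.range n, g j) = 0 := by
    rw [two_smul]
    nth_rewrite 2 [hS]
    exact add_neg_cancel _
  have h3 : ((2:ℚ)⁻¹ * 2) • (∑ j ∈ Finset.range n, g j) = 0 := by
    rw [mul_smul, h2, smul_zero]
  norm_num at h3
  exact h3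

lemma dg_toFinsupp (s : Multiset ℕ) : dg (Multiset.toFinsupp s) = Multiset.card s := by
  have h := Finsupp.card_toMultiset (Multiset.toFinsupp s)
  rw [Multiset.toFinsupp_toMultiset] at h
  rw [dg]
  exact h.symm

lemma wt_toMultiset (f : ℕ →₀ ℕ) : wt f = (Finsupp.toMultiset f).sum := by
  induction f using Finsupp.induction with
  | zero => simp [wt]
  | single_add a b f han hb ih =>
    rw [map_add, Multiset.sum_add, ← ih, wt_add, wt_single]
    congr 1
    rw [Finsupp.toMultiset_single]
    simp [Multiset.nsmul_singleton, Multiset.sum_replicate, smul_eq_mul, mul_comm]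

lemma wt_erase_zero (d : ℕ →₀ ℕ) : wt (Finsupp.erase 0 d) = wt d := by
  conv_rhs => rw [← Finsupp.single_add_erase 0 d]
  rw [wt_add, wt_single]
  omega

lemma dg_erase_zero (d : ℕ →₀ ℕ) : dg (Finsupp.erase 0 d) + d 0 = dg d := by
  conv_rhs => rw [← Finsupp.single_add_erase 0 d]
  rw [dg_add, dg_single]
  omega

def partEquiv (n k m : ℕ) :
    {π : Nat.Partition m // π.parts.card ≤ k ∧ ∀ j ∈ π.parts, j ≤ n}
      ≃ {d : ℕ →₀ ℕ // good n k (m : ℤ) d} where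
  toFun := fun x => ⟨Multiset.toFinsupp x.1.parts + fun₀ | 0 => (k - x.1.parts.card), by
    have hc := x.2.1
    have hb := x.2.2
    refine ⟨?_, ?_, ?_⟩
    · rw [dg_add, dg_toFinsupp, dg_single]
      omega
    · rw [wt_add, wt_toMultiset, Multiset.toFinsupp_toMultiset, wt_single, x.1.parts_sum]
      simp
    · intro i hi
      rcases Finset.mem_union.1 (Finsupp.support_add hi) with h | h
      · rw [Multiset.toFinsupp_support, Multiset.mem_toFinset] at h
        exact hb i h
      · rw [Finsupp.mem_support_iff, Finsupp.single_apply] at h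
        rcases eq_or_ne (0:ℕ) i with h0 | h0
        · omega
        · rw [if_neg h0] at h; omega⟩
  invFun := fun x => ⟨⟨Finsupp.toMultiset (Finsupp.erase 0 x.1), by
      intro i hi
      rw [Finsupp.mem_toMultiset, Finsupp.support_erase, Finset.mem_erase] at hi
      omega, by
      obtain ⟨d, h1, h2, h3⟩ := x
      have : (Finsupp.toMultiset (Finsupp.erase 0 d)).sum = wt d := by
        rw [← wt_toMultiset, wt_erase_zero]
      rw [this]
      exact_mod_cast h2⟩, by
    obtain ⟨d, h1, h2, h3⟩ := x
    constructor
    · show (Multiset.card (Finsupp.toMultiset (Finsupp.erase 0 d))) ≤ k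
      have hcard := Finsupp.card_toMultiset (Finsupp.erase 0 d)
      have hdg : dg (Finsupp.erase 0 d) + d 0 = dg d := dg_erase_zero d
      have : dg (Finsupp.erase 0 d) = (Finsupp.erase 0 d).sum fun _ e => e := rfl
      rw [hcard]
      have h4 : ((Finsupp.erase 0 d).sum fun _x => id) = dg (Finsupp.erase 0 d) := rfl
      rw [h4]
      omega
    · intro j hj
      rw [Finsupp.mem_toMultiset, Finsupp.support_erase, Finset.mem_erase] at hj
      exact h3 j hj.2⟩
  left_inv := by
    rintro ⟨π, hc, hb⟩
    apply Subtype.ext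
    apply Nat.Partition.ext
    show Finsupp.toMultiset (Finsupp.erase 0 (Multiset.toFinsupp π.parts + fun₀ | 0 => _)) = π.parts
    have he : Finsupp.erase 0 (Multiset.toFinsupp π.parts + fun₀ | 0 => (k - π.parts.card))
        = Multiset.toFinsupp π.parts := by
      ext i
      rcases eq_or_ne i 0 with h0 | h0
      · rw [h0, Finsupp.erase_same, Multiset.toFinsupp_apply]
        have hnot : (0:ℕ) ∉ π.parts := fun h => by have := π.parts_pos h; omega
        rw [Multiset.count_eq_zero_of_notMem hnot]
      · rw [Finsupp.erase_ne h0, Finsupp.add_apply, Finsupp.single_apply,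
          if_neg (Ne.symm h0), add_zero]
    rw [he, Multiset.toFinsupp_toMultiset]
  right_inv := by
    rintro ⟨d, h1, h2, h3⟩
    apply Subtype.ext
    show Multiset.toFinsupp (Finsupp.toMultiset (Finsupp.erase 0 d)) + _ = d
    rw [Finsupp.toMultiset_toFinsupp]
    have hcard : Multiset.card (Finsupp.toMultiset (Finsupp.erase 0 d)) = dg (Finsupp.erase 0 d) :=
      Finsupp.card_toMultiset _
    rw [hcard]
    have hdg : dg (Finsupp.erase 0 d) + d 0 = dg d := dg_erase_zero d
    have hd0 : k - dg (Finsupp.erase 0 d) = d 0 := by omega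
    rw [hd0]
    exact Finsupp.erase_add_single 0 d

lemma finrank_V (n k : ℕ) (m : ℤ) : Module.finrank ℚ (V n k m) = pZ k n m := by
  rcases lt_or_ge m 0 with hm | hm
  · rw [V_eq_bot hm, pZ, if_neg (by omega)]
    exact finrank_bot ℚ R
  · obtain ⟨m', rfl⟩ : ∃ m' : ℕ, (m' : ℤ) = m := ⟨m.toNat, by omega⟩
    rw [pZ, if_pos hm, Int.toNat_natCast]
    haveI F1 : Fintype {d : ℕ →₀ ℕ // good n k (m' : ℤ) d} :=
      Fintype.ofEquiv _ (partEquiv n k m')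
    haveI : Fintype ↥{d : ℕ →₀ ℕ | good n k (m' : ℤ) d} := F1
    have hli : LinearIndependent ℚ
        (fun (x : {d : ℕ →₀ ℕ | good n k (m' : ℤ) d}) => (monomial x.1 1 : R)) := by
      have hb := (MvPolynomial.basisMonomials ℕ ℚ).linearIndependent
      have := hb.comp (fun (x : {d : ℕ →₀ ℕ | good n k (m' : ℤ) d}) => x.1)
        Subtype.val_injective
      have hfun : (⇑(MvPolynomial.basisMonomials ℕ ℚ)
          ∘ (fun (x : {d : ℕ →₀ ℕ | good n k (m' : ℤ) d}) => x.1))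
          = fun (x : {d : ℕ →₀ ℕ | good n k (m' : ℤ) d}) => (monomial x.1 1 : R) := by
        funext x
        rw [Function.comp_apply, MvPolynomial.coe_basisMonomials]
      rwa [hfun] at this
    have hspan : V n k (m' : ℤ) = Submodule.span ℚ
        (Set.range (fun (x : {d : ℕ →₀ ℕ | good n k (m' : ℤ) d}) => (monomial x.1 1 : R))) := by
      rw [V_eq_span, Set.image_eq_range]
    rw [hspan, finrank_span_eq_card hli]
    rw [p]
    have e2 : (↥{d : ℕ →₀ ℕ | good n k (m' : ℤ) d}) ≃ {d : ℕ →₀ ℕ // good n k (m' : ℤ) d} :=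
      Equiv.subtypeEquivRight (fun _ => Iff.rfl)
    exact Fintype.card_congr (e2.trans (partEquiv n k m').symm)

instance fd_V (n k : ℕ) (m : ℤ) : FiniteDimensional ℚ (V n k m) := by
  rcases lt_or_ge m 0 with hm | hm
  · rw [V_eq_bot hm]
    infer_instance
  · obtain ⟨m', rfl⟩ : ∃ m' : ℕ, (m' : ℤ) = m := ⟨m.toNat, by omega⟩
    haveI F1 : Fintype {d : ℕ →₀ ℕ // good n k (m' : ℤ) d} :=
      Fintype.ofEquiv _ (partEquiv n k m')
    haveI : Fintype ↥{d : ℕ →₀ ℕ | good n k (m' : ℤ) d} := F1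
    rw [V_eq_span]
    apply FiniteDimensional.span_of_finite
    apply Set.Finite.image
    exact Set.toFinite _

theorem main_ineq (n k m : ℕ) (hn : Even n) (hk : 2 ≤ k) (hnm : n ≤ m)
    (hm : 2 * m ≤ n * k) :
    pZ k n ((m : ℤ) - 1) + pZ (k - 2) n ((m : ℤ) - n)
      ≤ pZ k n (m : ℤ) + pZ (k - 2) n ((m : ℤ) - n - 1) := by
  classical
  set A := V n k ((m : ℤ) - 1)
  set B := V n (k - 2) ((m : ℤ) - n)
  set C := V n k (m : ℤ)
  set D := V n (k - 2) ((m : ℤ) - n - 1)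
  have hmemE : ∀ x ∈ A, Eop n x ∈ C := by
    intro x hx
    have := Eop_mem hx
    have hidx : ((m : ℤ) - 1) + 1 = (m : ℤ) := by ring
    rwa [hidx] at this
  have hmemQ : ∀ x ∈ B, Qp n * x ∈ C := by
    intro x hx
    have := V_mul (Qp_mem n) hx
    have hidx1 : 2 + (k - 2) = k := by omega
    have hidx2 : (n : ℤ) + ((m : ℤ) - n) = (m : ℤ) := by ring
    rwa [hidx1, hidx2] at this
  have hmemF : ∀ x ∈ B, Fop n x ∈ D := by
    intro x hx
    exact Fop_mem hx
  let e1 : A →ₗ[ℚ] C := (Eop n).restrict hmemE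
  let q1 : B →ₗ[ℚ] C := (LinearMap.mulLeft ℚ (Qp n)).restrict hmemQ
  let f1 : B →ₗ[ℚ] D := (Fop n).restrict hmemF
  let Φ : (A × B) →ₗ[ℚ] (C × D) :=
    LinearMap.prod
      (e1.comp (LinearMap.fst ℚ A B) + q1.comp (LinearMap.snd ℚ A B))
      (f1.comp (LinearMap.snd ℚ A B))
  have hinj : Function.Injective Φ := by
    rw [injective_iff_map_eq_zero]
    intro x hx
    have h1 : e1 x.1 + q1 x.2 = 0 := congrArg Prod.fst hx
    have h2 : f1 x.2 = 0 := congrArg Prod.snd hx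
    have h1' : Eop n (x.1 : R) + Qp n * (x.2 : R) = 0 := congrArg Subtype.val h1
    have h2' : Fop n (x.2 : R) = 0 := congrArg Subtype.val h2
    have hFE : Fop n (Eop n (x.1 : R)) = 0 := by
      have := congrArg (Fop n) h1'
      simp only [map_add, map_zero, Fop_mul, Fop_Qp n hn, h2', zero_mul, mul_zero,
        add_zero, zero_add] at this
      exact this
    have hx1 : (x.1 : R) = 0 := by
      refine FE_inj ?_ x.1.2 hFE
      have : (2 : ℤ) * m ≤ (n : ℤ) * k := by exact_mod_cast hm
      omega
    have hx2 : (x.2 : R) = 0 := by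
      rw [hx1, map_zero, zero_add] at h1'
      rcases mul_eq_zero.mp h1' with h | h
      · exact absurd h (Qp_ne n hn)
      · exact h
    have : x = 0 := by
      apply Prod.ext
      · exact Subtype.ext hx1
      · exact Subtype.ext hx2
    exact this
  haveI : Module.Free ℚ A := Module.Free.of_divisionRing ℚ A
  haveI : Module.Free ℚ B := Module.Free.of_divisionRing ℚ B
  haveI : Module.Free ℚ C := Module.Free.of_divisionRing ℚ C
  haveI : Module.Free ℚ D := Module.Free.of_divisionRing ℚ D
  have hle := LinearMap.finrank_le_finrank_of_injective hinj
  rw [Module.finrank_prod, Module.finrank_prod] at hle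
  rw [finrank_V, finrank_V, finrank_V, finrank_V] at hle
  exact hle

end
end DeltaGe

/-- If $n$ is even, $k ≥ 2$, $n ≤ m ≤ nk/2$, then
$δ(k,n,m) ≥ δ(k-2,n,m-n)$ where $δ(k,n,m) = p(k,n,m) - p(k,n,m-1)$. -/
theorem delta_ge (n k m : ℕ) (hn : Even n) (hk : 2 ≤ k) (hnm : n ≤ m)
    (hm : 2 * m ≤ n * k) :
    (pZ (k - 2) n ((m : ℤ) - n) : ℤ) - pZ (k - 2) n ((m : ℤ) - n - 1) ≤
      (pZ k n m : ℤ) - pZ k n ((m : ℤ) - 1) := by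
  have h := DeltaGe.main_ineq n k m hn hk hnm hm
  omega
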